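/- For every natural number k₁: x_{α₂}(0)^{k₁+1} · x_{α₁}(−1)^{k₁} ∈ U(𝔫̄)·𝔫̄₊, the left ideal of U(𝔫̄) generated by 𝔫̄₊ = 𝔫 ⊗ ℂ[t]. -/

import Mathlib

/- Setup: the nilpotent subalgebra 𝔫 ⊂ 𝔰𝔩(3,ℂ) spanned by E₁₂, E₂₃, E₁₃, its loop
algebra 𝔫̄ = 𝔫 ⊗ ℂ[t,t⁻¹], and the universal enveloping algebra U(𝔫̄). -/

noncomputable section
open scoped TensorProduct

namespace PrincipalSubspaceSL3

attribute [local instance 100] LieRing.ofAssociativeRing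

/-- 3×3 complex matrices. -/
abbrev gl3 : Type := Matrix (Fin 3) (Fin 3) ℂ

/-- The root vectors: `Egen 0 = x_{α₁} = E₁₂`, `Egen 1 = x_{α₂} = E₂₃`,
`Egen 2 = x_{α₁+α₂} = E₁₃`. -/
def Egen : Fin 3 → gl3
  | 0 => Matrix.single 0 1 1
  | 1 => Matrix.single 1 2 1
  | 2 => Matrix.single 0 2 1

lemma egen_lie_mem :
    ∀ x ∈ Submodule.span ℂ (Set.range Egen), ∀ y ∈ Submodule.span ℂ (Set.range Egen),
      ⁅x, y⁆ ∈ Submodule.span ℂ (Set.range Egen) := by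
  have key : ∀ a b : Fin 3, ⁅Egen a, Egen b⁆ ∈ Submodule.span ℂ (Set.range Egen) := by
    intro a b
    fin_cases a <;> fin_cases b <;>
      simp only [Egen, Ring.lie_def, Matrix.single_mul_single_same,
        Matrix.single_mul_single_of_ne, Fin.reduceEq, ne_eq, not_false_eq_true,
        one_mul, sub_zero, zero_sub, sub_self] <;>
      first
        | exact Submodule.zero_mem _
        | exact Submodule.subset_span ⟨2, rfl⟩
        | exact Submodule.neg_mem _ (Submodule.subset_span ⟨2, rfl⟩)
  intro x hx
  induction hx using Submodule.span_induction with
  | mem x hxs =>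
      obtain ⟨a, rfl⟩ := hxs
      intro y hy
      induction hy using Submodule.span_induction with
      | mem y hys => obtain ⟨b, rfl⟩ := hys; exact key a b
      | zero => simp
      | add y z hy hz hy' hz' => rw [lie_add]; exact Submodule.add_mem _ hy' hz'
      | smul c y hy hy' => rw [lie_smul]; exact Submodule.smul_mem _ _ hy'
  | zero => intro y hy; simp
  | add x z hx hz hx' hz' =>
      intro y hy; rw [add_lie]; exact Submodule.add_mem _ (hx' y hy) (hz' y hy)
  | smul c x hx hx' =>
      intro y hy; rw [smul_lie]; exact Submodule.smul_mem _ _ (hx' y hy)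

/-- The nilpotent Lie subalgebra 𝔫 = ℂE₁₂ ⊕ ℂE₂₃ ⊕ ℂE₁₃ of 𝔰𝔩(3,ℂ). -/
def nn : LieSubalgebra ℂ gl3 :=
  { Submodule.span ℂ (Set.range Egen) with
    lie_mem' := fun {x y} hx hy => egen_lie_mem x hx y hy }

/-- Laurent polynomials ℂ[t, t⁻¹]. -/
abbrev A : Type := LaurentPolynomial ℂ

/-- The loop algebra 𝔫̄ = 𝔫 ⊗ ℂ[t,t⁻¹]. -/
abbrev nbar : Type := A ⊗[ℂ] nn

set_option synthInstance.maxHeartbeats 1000000 in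
instance : LieAlgebra ℂ nbar where
  lie_smul c x y := by
    have h := lie_smul (algebraMap ℂ A c) x y
    rwa [algebraMap_smul, algebraMap_smul] at h

/-- The root vectors as elements of 𝔫. -/
def en (i : Fin 3) : nn := ⟨Egen i, Submodule.subset_span ⟨i, rfl⟩⟩

/-- `nx i m` is the element x_{α}(m) = x_α ⊗ tᵐ of 𝔫̄, where α is α₁, α₂, α₁+α₂
according to i = 0, 1, 2. -/
def nx (i : Fin 3) (m : ℤ) : nbar := LaurentPolynomial.T m ⊗ₜ[ℂ] en i

/-- The universal enveloping algebra U(𝔫̄). -/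
abbrev U : Type := UniversalEnvelopingAlgebra ℂ nbar

/-- `xg i m` is the element x_α(m) regarded inside U(𝔫̄). -/
def xg (i : Fin 3) (m : ℤ) : U := UniversalEnvelopingAlgebra.ι ℂ (nx i m)

/-- `Rtr k i t` = R^i_{-1,t} : the sum of x_{α_i}(m₁)⋯x_{α_i}(m_{k+1}) over all integer
tuples with every m_j ≤ -1 and m₁+⋯+m_{k+1} = -t (parametrized by m_j = -1 - n_j with
n : Fin (k+1) → ℕ, ∑ n = t - (k+1)).  Here i : Fin 2 refers to the simple root α_{i+1}. -/
def Rtr (k : ℕ) (i : Fin 2) (t : ℤ) : U :=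
  ∑ f ∈ Finset.Nat.antidiagonalTuple (k + 1) (t - (k + 1)).toNat,
    (List.ofFn fun j : Fin (k + 1) => xg i.castSucc (-1 - (f j : ℤ))).prod

/-- The left ideal J = Σ_{i,t≥k+1} U(𝔫̄)·R^i_{-1,t}. -/
def Jid (k : ℕ) : Submodule U U :=
  Submodule.span U {u : U | ∃ i : Fin 2, ∃ t : ℤ, (k : ℤ) + 1 ≤ t ∧ u = Rtr k i t}

/-- The left ideal U(𝔫̄)·𝔫̄₊, generated by the x_α(m) with m ≥ 0. -/
def nplusIdeal : Submodule U U :=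
  Submodule.span U {u : U | ∃ i : Fin 3, ∃ m : ℤ, 0 ≤ m ∧ u = xg i m}

/-- The left ideal I_{kΛ₀} = J + U(𝔫̄)·𝔫̄₊. -/
def IkL0 (k : ℕ) : Submodule U U := Jid k ⊔ nplusIdeal

/-- The left ideal I_{k₀Λ₀+k₁Λ₁+k₂Λ₂} = I_{kΛ₀} + U·x_{α₁}(-1)^{k₀+k₂+1}
+ U·x_{α₂}(-1)^{k₀+k₁+1} + U·x_{α₁+α₂}(-1)^{k₀+1} (with k = k₀+k₁+k₂). -/
def Iwt (k k0 k1 k2 : ℕ) : Submodule U U :=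
  IkL0 k ⊔ Submodule.span U {xg 0 (-1) ^ (k0 + k2 + 1)}
    ⊔ Submodule.span U {xg 1 (-1) ^ (k0 + k1 + 1)}
    ⊔ Submodule.span U {xg 2 (-1) ^ (k0 + 1)}


set_option synthInstance.maxHeartbeats 1000000
set_option maxHeartbeats 1000000

lemma lie_en_10 : ⁅en 1, en 0⁆ = -(en 2) := by
  apply Subtype.ext
  show ⁅Egen 1, Egen 0⁆ = -(Egen 2)
  simp [Egen, Ring.lie_def, Matrix.single_mul_single_same, Matrix.single_mul_single_of_ne]

lemma lie_en_2 (i : Fin 3) : ⁅en 2, en i⁆ = 0 := by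
  apply Subtype.ext
  show ⁅Egen 2, Egen i⁆ = (0 : gl3)
  fin_cases i <;>
    simp [Egen, Ring.lie_def, Matrix.single_mul_single_same, Matrix.single_mul_single_of_ne]

lemma lie_nx_10 : ⁅nx 1 0, nx 0 (-1)⁆ = -(nx 2 (-1)) := by
  unfold nx
  rw [LieAlgebra.ExtendScalars.bracket_tmul, lie_en_10, TensorProduct.tmul_neg]
  congr 1
  rw [← LaurentPolynomial.T_add]
  norm_num

lemma lie_nx_2 (i : Fin 3) (m p : ℤ) : ⁅nx 2 m, nx i p⁆ = 0 := by
  unfold nx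
  rw [LieAlgebra.ExtendScalars.bracket_tmul, lie_en_2, TensorProduct.tmul_zero]

lemma xg_comm_10 : xg 1 0 * xg 0 (-1) = xg 0 (-1) * xg 1 0 - xg 2 (-1) := by
  have h := (UniversalEnvelopingAlgebra.ι ℂ (L := nbar)).map_lie (nx 1 0) (nx 0 (-1))
  rw [lie_nx_10, Ring.lie_def, map_neg] at h
  unfold xg
  calc UniversalEnvelopingAlgebra.ι ℂ (nx 1 0) * UniversalEnvelopingAlgebra.ι ℂ (nx 0 (-1))
      = UniversalEnvelopingAlgebra.ι ℂ (nx 0 (-1)) * UniversalEnvelopingAlgebra.ι ℂ (nx 1 0)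
        + (UniversalEnvelopingAlgebra.ι ℂ (nx 1 0) * UniversalEnvelopingAlgebra.ι ℂ (nx 0 (-1))
          - UniversalEnvelopingAlgebra.ι ℂ (nx 0 (-1)) * UniversalEnvelopingAlgebra.ι ℂ (nx 1 0)) := by
        abel
    _ = UniversalEnvelopingAlgebra.ι ℂ (nx 0 (-1)) * UniversalEnvelopingAlgebra.ι ℂ (nx 1 0)
          - UniversalEnvelopingAlgebra.ι ℂ (nx 2 (-1)) := by rw [← h]; abel

lemma xg_comm_2 (i : Fin 3) (m p : ℤ) : xg 2 m * xg i p = xg i p * xg 2 m := by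
  have h := (UniversalEnvelopingAlgebra.ι ℂ (L := nbar)).map_lie (nx 2 m) (nx i p)
  rw [lie_nx_2, Ring.lie_def, map_zero] at h
  unfold xg
  rw [← sub_eq_zero]
  exact h.symm

lemma xg_pow_comm (m : ℕ) :
    xg 1 0 ^ (m + 1) * xg 0 (-1)
      = xg 0 (-1) * xg 1 0 ^ (m + 1) - (m + 1) • (xg 2 (-1) * xg 1 0 ^ m) := by
  induction m with
  | zero => simpa using xg_comm_10
  | succ m ih =>
      have e0 : xg 1 0 ^ (m + 1 + 1) * xg 0 (-1)
          = xg 1 0 * (xg 1 0 ^ (m + 1) * xg 0 (-1)) := by rw [pow_succ', mul_assoc]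
      rw [e0, ih, mul_sub, mul_smul_comm, ← mul_assoc, xg_comm_10, sub_mul]
      have e2 : xg 1 0 * (xg 2 (-1) * xg 1 0 ^ m) = xg 2 (-1) * xg 1 0 ^ (m + 1) := by
        rw [← mul_assoc, ← xg_comm_2 1 (-1) 0, mul_assoc, ← pow_succ']
      have e3 : xg 0 (-1) * xg 1 0 * xg 1 0 ^ (m + 1) = xg 0 (-1) * xg 1 0 ^ (m + 1 + 1) := by
        rw [mul_assoc, ← pow_succ']
      rw [e2, e3, sub_sub]
      conv_rhs => rw [succ_nsmul]
      rw [add_comm (xg 2 (-1) * xg 1 0 ^ (m + 1))]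

lemma xg10_mem : xg 1 0 ∈ nplusIdeal :=
  Submodule.subset_span ⟨1, 0, le_refl 0, rfl⟩

lemma main_aux (k : ℕ) : ∀ m : ℕ, xg 1 0 ^ (k + m + 1) * xg 0 (-1) ^ k ∈ nplusIdeal := by
  induction k with
  | zero =>
      intro m
      simp only [Nat.zero_add, pow_zero, mul_one, pow_succ]
      exact Submodule.smul_mem _ (xg 1 0 ^ m) xg10_mem
  | succ k ih =>
      intro m
      have key : xg 1 0 ^ (k + 1 + m + 1) * xg 0 (-1) ^ (k + 1)
          = xg 0 (-1) * (xg 1 0 ^ (k + m + 1 + 1) * xg 0 (-1) ^ k)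
            - (k + m + 1 + 1) • (xg 2 (-1) * (xg 1 0 ^ (k + m + 1) * xg 0 (-1) ^ k)) := by
        have hexp : k + 1 + m + 1 = k + m + 1 + 1 := by omega
        have e1 : xg 1 0 ^ (k + 1 + m + 1) * xg 0 (-1) ^ (k + 1)
            = (xg 1 0 ^ (k + m + 1 + 1) * xg 0 (-1)) * xg 0 (-1) ^ k := by
          rw [hexp, pow_succ' (xg 0 (-1)), ← mul_assoc]
        rw [e1, xg_pow_comm (k + m + 1), sub_mul, smul_mul_assoc, mul_assoc, mul_assoc]
      rw [key]
      exact Submodule.sub_mem _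
        (Submodule.smul_mem _ _ (ih (m + 1)))
        (nsmul_mem (Submodule.smul_mem _ _ (ih m)) _)

/-- for every k₁ ∈ ℕ, x_{α₂}(0)^{k₁+1}·x_{α₁}(−1)^{k₁} ∈ U(𝔫̄)·𝔫̄₊. -/
theorem statement18 (k1 : ℕ) :
    xg 1 0 ^ (k1 + 1) * xg 0 (-1) ^ k1 ∈ nplusIdeal :=
  main_aux k1 0

end PrincipalSubspaceSL3
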